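/- Let d ≥ 2, let 1 ≤ γ_1 ≤ … ≤ γ_{d-1} ≤ β be positive integers, and let p, n be positive integers with gcd(p,n) = 1. Then ∏_{k=1}^{βn−1} ( d − e^{2πi p k/(βn)} − ∑_{m=1}^{d-1} e^{2πi (γ_m n + p) k/(βn)} ) = n d^{βn−1} ∏_{k=1}^{β−1} ( 1 − d^{−n} (1 + ∑_{m=1}^{d-1} e^{2πi γ_m k/β})^{n} e^{2πi p k/β} ). -/

import Mathlib

open Finset Real



lemma aux_prod_sub {n : ℕ} (hn : 0 < n) {ζ : ℂ} (hζ : IsPrimitiveRoot ζ n) (a b : ℂ) :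
    ∏ i ∈ Finset.range n, (a - ζ ^ i * b) = a ^ n - b ^ n := by
  have h := X_pow_sub_C_eq_prod hζ hn (rfl : b ^ n = b ^ n)
  have h2 := congrArg (Polynomial.eval a) h
  simp only [Polynomial.eval_sub, Polynomial.eval_pow, Polynomial.eval_X, Polynomial.eval_C,
    Polynomial.eval_prod, Polynomial.eval_mul] at h2
  rw [← h2]

lemma aux_prod_one_sub {n : ℕ} (hn : 1 ≤ n) {ζ : ℂ} (hζ : IsPrimitiveRoot ζ n) :
    ∏ k ∈ Finset.Icc 1 (n - 1), (1 - ζ ^ k) = (n : ℂ) := by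
  obtain ⟨m, rfl⟩ : ∃ m, n = m + 1 := ⟨n - 1, by omega⟩
  have h := hζ.prod_one_sub_pow_eq_order
  rw [show ((m : ℂ) + 1 : ℂ) = ((m + 1 : ℕ) : ℂ) by push_cast; ring] at h
  rw [show m + 1 - 1 = m by omega, ← h]
  refine Finset.prod_bij (fun k _ => k - 1) ?_ ?_ ?_ ?_
  · intro a ha; simp at ha ⊢; omega
  · intro a ha b hb hab; simp at ha hb; omega
  · intro b hb; exact ⟨b + 1, by simp at hb ⊢; omega, by simp⟩
  · intro a ha; simp at ha; congr 2; omega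


lemma aux_partition {β n : ℕ} (hβ : 1 ≤ β) (hn : 1 ≤ n) (f : ℕ → ℂ) :
    ∏ k ∈ Finset.Icc 1 (β * n - 1), f k =
      (∏ t ∈ Finset.Icc 1 (n - 1), f (β * t)) *
      ∏ j ∈ Finset.Icc 1 (β - 1), ∏ t ∈ Finset.range n, f (j + β * t) := by
  have hkey : ∀ t, β * (t + 1) = β * t + β := by intro t; ring
  have hset : Finset.Icc 1 (β * n - 1) =
      ((Finset.Icc 1 (n - 1)).image (fun t => β * t)) ∪
      ((Finset.Icc 1 (β - 1) ×ˢ Finset.range n).image (fun x => x.1 + β * x.2)) := by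
    ext k
    simp only [Finset.mem_Icc, Finset.mem_union, Finset.mem_image, Finset.mem_product,
      Finset.mem_range, Prod.exists]
    constructor
    · rintro ⟨hk1, hk2⟩
      have hdm := Nat.div_add_mod k β
      have hmlt : k % β < β := Nat.mod_lt _ (by omega)
      have hdle : k / β < n := by
        by_contra h
        have : β * n ≤ β * (k / β) := Nat.mul_le_mul_left β (by omega)
        omega
      by_cases hmod : k % β = 0
      · left
        refine ⟨k / β, ⟨?_, by omega⟩, by omega⟩
        rcases Nat.eq_zero_or_pos (k / β) with h0 | h0
        · rw [h0] at hdm; omega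
        · omega
      · right
        exact ⟨k % β, k / β, ⟨⟨by omega, by omega⟩, hdle⟩, by omega⟩
    · rintro (⟨t, ⟨ht1, ht2⟩, rfl⟩ | ⟨j, t, ⟨⟨hj1, hj2⟩, ht⟩, rfl⟩)
      · have h1 : β * 1 ≤ β * t := Nat.mul_le_mul_left β ht1
        have h2 : β * t ≤ β * (n - 1) := Nat.mul_le_mul_left β ht2
        have h3 : β * (n - 1) + β = β * n := by rw [← hkey]; congr 1; omega
        omega
      · have h2 : β * t ≤ β * (n - 1) := Nat.mul_le_mul_left β (by omega)
        have h3 : β * (n - 1) + β = β * n := by rw [← hkey]; congr 1; omega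
        omega
  have hdisj : Disjoint ((Finset.Icc 1 (n - 1)).image (fun t => β * t))
      ((Finset.Icc 1 (β - 1) ×ˢ Finset.range n).image (fun x => x.1 + β * x.2)) := by
    rw [Finset.disjoint_left]
    rintro a ha hb
    simp only [Finset.mem_image, Finset.mem_Icc, Finset.mem_product, Finset.mem_range,
      Prod.exists] at ha hb
    obtain ⟨t, _, rfl⟩ := ha
    obtain ⟨j, t', ⟨⟨hj1, hj2⟩, _⟩, he⟩ := hb
    have h1 : (j + β * t') % β = j % β := Nat.add_mul_mod_self_left j β t'
    have h2 : j % β = j := Nat.mod_eq_of_lt (by omega)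
    have h3 : (β * t) % β = 0 := Nat.mul_mod_right β t
    rw [← he] at h3
    omega
  rw [hset, Finset.prod_union hdisj, Finset.prod_image, Finset.prod_image, Finset.prod_product]
  · rintro ⟨j, t⟩ hjt ⟨j', t'⟩ hjt' he
    simp only [Finset.mem_coe, Finset.mem_product, Finset.mem_Icc, Finset.mem_range] at hjt hjt'
    simp only at he
    have h1 : (j + β * t) % β = j % β := Nat.add_mul_mod_self_left j β t
    rw [he] at h1
    have h2 : (j' + β * t') % β = j' % β := Nat.add_mul_mod_self_left j' β t'
    have h3 : j % β = j := Nat.mod_eq_of_lt (by omega)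
    have h4 : j' % β = j' := Nat.mod_eq_of_lt (by omega)
    have hj : j = j' := by omega
    have hbt : β * t = β * t' := by omega
    have ht : t = t' := Nat.eq_of_mul_eq_mul_left (by omega) hbt
    simp [hj, ht]
  · intro a _ b _ he
    simp only at he
    exact Nat.eq_of_mul_eq_mul_left (by omega) he


theorem stmt_14 (d β p n : ℕ) (γ : ℕ → ℕ) (hd : 2 ≤ d)
    (hγ1 : ∀ m ∈ Finset.Icc 1 (d - 1), 1 ≤ γ m)
    (hγmono : ∀ m ∈ Finset.Icc 1 (d - 1), ∀ m' ∈ Finset.Icc 1 (d - 1), m ≤ m' → γ m ≤ γ m')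
    (hγβ : ∀ m ∈ Finset.Icc 1 (d - 1), γ m ≤ β)
    (hβ : 1 ≤ β) (hp : 1 ≤ p) (hn : 1 ≤ n) (hpn : Nat.gcd p n = 1) :
    ∏ k ∈ Finset.Icc 1 (β * n - 1),
        ((d : ℂ) - Complex.exp (2 * Real.pi * Complex.I * p * k / (β * n))
          - ∑ m ∈ Finset.Icc 1 (d - 1),
              Complex.exp (2 * Real.pi * Complex.I * (γ m * n + p) * k / (β * n)))
      = (n : ℂ) * (d : ℂ) ^ (β * n - 1) *
        ∏ k ∈ Finset.Icc 1 (β - 1),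
          (1 - ((d : ℂ) ^ n)⁻¹
              * (1 + ∑ m ∈ Finset.Icc 1 (d - 1),
                  Complex.exp (2 * Real.pi * Complex.I * (γ m) * k / β)) ^ n
              * Complex.exp (2 * Real.pi * Complex.I * p * k / β)) := by
  have hn0 : n ≠ 0 := by omega
  have hβ0 : β ≠ 0 := by omega
  have hnC : (n : ℂ) ≠ 0 := Nat.cast_ne_zero.mpr hn0
  have hβC : (β : ℂ) ≠ 0 := Nat.cast_ne_zero.mpr hβ0
  have hdC : (d : ℂ) ≠ 0 := Nat.cast_ne_zero.mpr (by omega)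
  have hdnC : (d : ℂ) ^ n ≠ 0 := pow_ne_zero _ hdC
  set μ : ℂ := Complex.exp (2 * Real.pi * Complex.I * p / n) with hμdef
  have hμ : IsPrimitiveRoot μ n := by
    have h := Complex.isPrimitiveRoot_exp_of_coprime p n hn0 hpn
    rwa [← mul_div_assoc] at h
  -- the common per-term identity
  have hterm : ∀ j t : ℕ,
      ((d : ℂ) - Complex.exp (2 * Real.pi * Complex.I * p * (↑(j + β * t)) / (β * n))
        - ∑ m ∈ Finset.Icc 1 (d - 1),
            Complex.exp (2 * Real.pi * Complex.I * (γ m * n + p) * (↑(j + β * t)) / (β * n)))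
      = (d : ℂ) - μ ^ t * (Complex.exp (2 * Real.pi * Complex.I * p * j / (β * n)) *
          (1 + ∑ m ∈ Finset.Icc 1 (d - 1),
            Complex.exp (2 * Real.pi * Complex.I * (γ m) * j / β))) := by
    intro j t
    have e1 : Complex.exp (2 * Real.pi * Complex.I * p * (↑(j + β * t)) / (β * n))
        = Complex.exp (2 * Real.pi * Complex.I * p * j / (β * n)) * μ ^ t := by
      rw [hμdef, ← Complex.exp_nat_mul, ← Complex.exp_add]
      congr 1
      push_cast
      field_simp
    have e2 : ∀ m : ℕ,
        Complex.exp (2 * Real.pi * Complex.I * (γ m * n + p) * (↑(j + β * t)) / (β * n))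
        = Complex.exp (2 * Real.pi * Complex.I * p * j / (β * n)) * μ ^ t *
            Complex.exp (2 * Real.pi * Complex.I * (γ m) * j / β) := by
      intro m
      have key : Complex.exp ((((γ m * t : ℕ)) : ℂ) * (2 * Real.pi * Complex.I)) = 1 := by
        rw [show ((((γ m * t : ℕ)) : ℂ)) = (((γ m * t : ℕ) : ℤ) : ℂ) by push_cast; ring]
        exact Complex.exp_int_mul_two_pi_mul_I _
      calc Complex.exp (2 * Real.pi * Complex.I * (γ m * n + p) * (↑(j + β * t)) / (β * n))
          = Complex.exp (2 * Real.pi * Complex.I * p * j / (β * n)) * μ ^ t *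
              Complex.exp (2 * Real.pi * Complex.I * (γ m) * j / β) *
              Complex.exp ((((γ m * t : ℕ)) : ℂ) * (2 * Real.pi * Complex.I)) := by
            rw [hμdef, ← Complex.exp_nat_mul, ← Complex.exp_add, ← Complex.exp_add,
              ← Complex.exp_add]
            congr 1
            push_cast
            field_simp
            try ring
        _ = _ := by rw [key, mul_one]
    rw [e1, Finset.sum_congr rfl fun m _ => e2 m, ← Finset.mul_sum]
    ring
  have hstep : ∀ t : ℕ,
      ((d : ℂ) - Complex.exp (2 * Real.pi * Complex.I * p * (↑(β * t)) / (β * n))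
        - ∑ m ∈ Finset.Icc 1 (d - 1),
            Complex.exp (2 * Real.pi * Complex.I * (γ m * n + p) * (↑(β * t)) / (β * n)))
      = (d : ℂ) * (1 - μ ^ t) := by
    intro t
    have h0 := hterm 0 t
    simp only [Nat.zero_add, Nat.cast_zero, mul_zero, zero_div, Complex.exp_zero, mul_one,
      one_mul] at h0
    rw [h0, Finset.sum_const, Nat.card_Icc]
    simp only [nsmul_eq_mul, mul_one]
    rw [show d - 1 + 1 - 1 = d - 1 from rfl, Nat.cast_sub (by omega : 1 ≤ d)]
    push_cast
    ring
  have hinner : ∀ j : ℕ,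
      (∏ t ∈ Finset.range n,
        ((d : ℂ) - Complex.exp (2 * Real.pi * Complex.I * p * (↑(j + β * t)) / (β * n))
          - ∑ m ∈ Finset.Icc 1 (d - 1),
              Complex.exp (2 * Real.pi * Complex.I * (γ m * n + p) * (↑(j + β * t)) / (β * n))))
      = (d : ℂ) ^ n *
          (1 - ((d : ℂ) ^ n)⁻¹
            * (1 + ∑ m ∈ Finset.Icc 1 (d - 1),
                Complex.exp (2 * Real.pi * Complex.I * (γ m) * j / β)) ^ n
            * Complex.exp (2 * Real.pi * Complex.I * p * j / β)) := by
    intro j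
    have hps := aux_prod_sub (show 0 < n by omega) hμ (d : ℂ)
      (Complex.exp (2 * Real.pi * Complex.I * p * j / (β * n)) *
        (1 + ∑ m ∈ Finset.Icc 1 (d - 1),
          Complex.exp (2 * Real.pi * Complex.I * (γ m) * j / β)))
    rw [Finset.prod_congr rfl (fun t _ => hterm j t), hps]
    have hE : Complex.exp (2 * Real.pi * Complex.I * p * j / (β * n)) ^ n
        = Complex.exp (2 * Real.pi * Complex.I * p * j / β) := by
      rw [← Complex.exp_nat_mul]
      congr 1
      field_simp
    rw [mul_pow, hE]
    field_simp
  rw [aux_partition hβ hn]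
  rw [Finset.prod_congr rfl (fun t _ => hstep t),
    Finset.prod_congr rfl (fun j _ => hinner j),
    Finset.prod_mul_distrib, Finset.prod_mul_distrib, Finset.prod_const, Finset.prod_const,
    aux_prod_one_sub hn hμ, Nat.card_Icc, Nat.card_Icc]
  have hpow : (d : ℂ) ^ (n - 1 + 1 - 1) * ((d : ℂ) ^ n) ^ (β - 1 + 1 - 1)
      = (d : ℂ) ^ (β * n - 1) := by
    rw [← pow_mul, ← pow_add]
    congr 1
    obtain ⟨b, rfl⟩ : ∃ b, β = b + 1 := ⟨β - 1, by omega⟩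
    obtain ⟨m, rfl⟩ : ∃ m, n = m + 1 := ⟨n - 1, by omega⟩
    have h1 : (b + 1) * (m + 1) - 1 = m * b + b + m := by
      have : (b + 1) * (m + 1) = m * b + b + m + 1 := by ring
      omega
    have h2 : (m + 1) * (b + 1 - 1 + 1 - 1) = m * b + b := by
      rw [show b + 1 - 1 + 1 - 1 = b from rfl]; ring
    omega
  rw [← hpow]
  ring
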